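/- For any M-set X, the subset X^μ = {x ∈ X : x is supported on some co-infinite subset of ω} is closed under the M-action, and it is the maximal mild M-subset of X. -/
import Mathlib


/-- The monoid of injective self-maps of ω (modelled as ℕ), under composition. -/
def M : Submonoid (Function.End ℕ) where
  carrier := {f | Function.Injective f}
  mul_mem' := fun hf hg => hf.comp hg
  one_mem' := fun _ _ h => h

/-- `x` is supported on `A` if it is fixed by every injection fixing `A` pointwise. -/
def Supported {X : Type*} [MulAction M X] (A : Set ℕ) (x : X) : Prop :=
  ∀ u : M, (∀ a ∈ A, u.1 a = a) → u • x = x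

theorem stmt_13 {X : Type*} [MulAction M X] :
    (∀ (f : M), ∀ x ∈ {x : X | ∃ A : Set ℕ, (Aᶜ : Set ℕ).Infinite ∧ Supported A x},
      f • x ∈ {x : X | ∃ A : Set ℕ, (Aᶜ : Set ℕ).Infinite ∧ Supported A x}) ∧
    (∀ Y : Set X, (∀ (f : M), ∀ y ∈ Y, f • y ∈ Y) →
      (∀ y ∈ Y, ∃ A : Set ℕ, (Aᶜ : Set ℕ).Infinite ∧ Supported A y) →
      Y ⊆ {x : X | ∃ A : Set ℕ, (Aᶜ : Set ℕ).Infinite ∧ Supported A x}) := by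
  constructor
  · rintro f x ⟨A, hA, hs⟩
    refine ⟨f.1 '' A ∪ (Set.range f.1)ᶜ, ?_, ?_⟩
    · refine Set.Infinite.mono ?_ (hA.image f.2.injOn)
      rintro _ ⟨n, hn, rfl⟩
      simp only [Set.compl_union, Set.mem_inter_iff, Set.mem_compl_iff, compl_compl]
      refine ⟨fun h => ?_, ⟨n, rfl⟩⟩
      obtain ⟨m, hm, he⟩ := h
      exact hn (by rwa [f.2 he] at hm)
    · intro u hu
      have hrange : ∀ n, u.1 (f.1 n) ∈ Set.range f.1 := by
        intro n
        by_contra h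
        have h1 : u.1 (u.1 (f.1 n)) = u.1 (f.1 n) := hu _ (Or.inr h)
        exact h ⟨n, (u.2 h1).symm⟩
      choose v hv using hrange
      have vinj : Function.Injective v := fun a b h =>
        f.2 (u.2 (by rw [← hv, ← hv, h]))
      set V : M := ⟨v, vinj⟩ with hV
      have key : u * f = f * V :=
        Subtype.ext (funext fun n => (hv n).symm)
      have hVA : ∀ a ∈ A, V.1 a = a := by
        intro a ha
        have : f.1 (v a) = f.1 a := by
          rw [hv a]
          exact hu _ (Or.inl ⟨a, ha, rfl⟩)
        exact f.2 this
      rw [← mul_smul, key, mul_smul, hs V hVA]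
  · intro Y _ h y hy
    exact h y hy
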